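/- arXiv:2211.05912 — 4 statements merged into one kernel-verified Lean document; each statement's English description precedes it below -/
import Mathlib

section
/- Let X = CZ(G_x, c_x, A_x, b_x) ⊂ ℝⁿ and W = CZ(G_w, c_w, A_w, b_w) ⊂ ℝ^p be constrained zonotopes, and M ∈ ℝ^{p×n}. Then the generalized intersection X ∩_M W = {x ∈ X : M x ∈ W} equals the constrained zonotope with generator matrix [G_x 0_{n×n_g^w}], center c_x, constraint matrix [[A_x, 0],[0, A_w],[M G_x, -G_w]], and constraint vector [b_x; b_w; c_w − M c_x]. -/
def CZ {n g h : Type*} [Fintype g] [Fintype h]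
    (G : Matrix n g ℝ) (c : n → ℝ) (A : Matrix h g ℝ) (b : h → ℝ) : Set (n → ℝ) :=
  {x | ∃ ξ : g → ℝ, (∀ i, |ξ i| ≤ 1) ∧ A.mulVec ξ = b ∧ x = G.mulVec ξ + c}

theorem generalized_intersection_of_CZ {n p ngx ngw nhx nhw : ℕ}
    (Gx : Matrix (Fin n) (Fin ngx) ℝ) (cx : Fin n → ℝ)
    (Ax : Matrix (Fin nhx) (Fin ngx) ℝ) (bx : Fin nhx → ℝ)
    (Gw : Matrix (Fin p) (Fin ngw) ℝ) (cw : Fin p → ℝ)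
    (Aw : Matrix (Fin nhw) (Fin ngw) ℝ) (bw : Fin nhw → ℝ)
    (M : Matrix (Fin p) (Fin n) ℝ) :
    {x ∈ CZ Gx cx Ax bx | M.mulVec x ∈ CZ Gw cw Aw bw}
      = CZ (Matrix.fromCols Gx (0 : Matrix (Fin n) (Fin ngw) ℝ)) cx
          (Matrix.fromRows (Matrix.fromBlocks Ax 0 0 Aw)
            (Matrix.fromCols (M * Gx) (-Gw)))
          (Sum.elim (Sum.elim bx bw) (cw - M.mulVec cx)) := by
  ext x
  simp only [Set.mem_setOf_eq, CZ, Set.mem_sep_iff]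
  constructor
  · rintro ⟨⟨ξx, hξx, hAx, rfl⟩, ξw, hξw, hAw, hW⟩
    refine ⟨Sum.elim ξx ξw, ?_, ?_, ?_⟩
    · rintro (i | i) <;> simp [hξx, hξw]
    · funext i
      rcases i with (i | i) | i
      · simp [Matrix.fromRows_mulVec, Matrix.fromBlocks_mulVec, hAx]
      · simp [Matrix.fromRows_mulVec, Matrix.fromBlocks_mulVec, hAw]
      · have : (Matrix.fromCols (M * Gx) (-Gw)).mulVec (Sum.elim ξx ξw)
            = (M * Gx).mulVec ξx + (-Gw).mulVec ξw := by
          rw [Matrix.fromCols_mulVec_sumElim]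
        simp only [Matrix.fromRows_mulVec, Sum.elim_inr, this]
        have h2 : M.mulVec (Gx.mulVec ξx + cx) = Gw.mulVec ξw + cw := by
          rw [← hW]
        simp only [Matrix.mulVec_add] at h2
        have h3 : (M * Gx).mulVec ξx = M.mulVec (Gx.mulVec ξx) := by
          rw [Matrix.mulVec_mulVec]
        simp only [Pi.add_apply, Matrix.neg_mulVec, Pi.neg_apply, Pi.sub_apply, h3]
        have := congrFun h2 i
        simp only [Pi.add_apply] at this
        linarith
    · rw [Matrix.fromCols_mulVec_sumElim]
      simp
  · rintro ⟨ξ, hξ, hA, rfl⟩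
    have hC : (Matrix.fromCols Gx (0 : Matrix (Fin n) (Fin ngw) ℝ)).mulVec ξ
        = Gx.mulVec (ξ ∘ Sum.inl) := by
      rw [← Sum.elim_comp_inl_inr ξ, Matrix.fromCols_mulVec_sumElim]
      simp
    have hAx : Ax.mulVec (ξ ∘ Sum.inl) = bx := by
      funext i
      have := congrFun hA (Sum.inl (Sum.inl i))
      rw [← Sum.elim_comp_inl_inr ξ, Matrix.fromRows_mulVec, Matrix.fromBlocks_mulVec] at this
      simpa using this
    have hAw : Aw.mulVec (ξ ∘ Sum.inr) = bw := by
      funext i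
      have := congrFun hA (Sum.inl (Sum.inr i))
      rw [← Sum.elim_comp_inl_inr ξ, Matrix.fromRows_mulVec, Matrix.fromBlocks_mulVec] at this
      simpa using this
    have hM : (M * Gx).mulVec (ξ ∘ Sum.inl) + (-Gw).mulVec (ξ ∘ Sum.inr)
        = cw - M.mulVec cx := by
      funext i
      have := congrFun hA (Sum.inr i)
      rw [← Sum.elim_comp_inl_inr ξ, Matrix.fromRows_mulVec,
        Matrix.fromCols_mulVec_sumElim] at this
      simpa using this
    refine ⟨⟨ξ ∘ Sum.inl, fun i => hξ _, hAx, by rw [hC]⟩,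
      ξ ∘ Sum.inr, fun i => hξ _, hAw, ?_⟩
    rw [hC]
    funext i
    have := congrFun hM i
    simp only [Pi.add_apply, Matrix.neg_mulVec, Pi.neg_apply, Pi.sub_apply,
      Matrix.mulVec_mulVec] at this ⊢
    have h3 := congrFun (Matrix.mulVec_add M (Gx.mulVec (ξ ∘ Sum.inl)) cx) i
    have h4 := congrFun (Matrix.mulVec_mulVec (ξ ∘ Sum.inl) M Gx) i
    simp only [Pi.add_apply] at h3
    rw [h3, h4]
    linarith
end

section
/- Let H be a real symmetric n×n matrix, and let [H] be an interval matrix with midpoint M = mid([H]) and radius R = rad([H]), i.e., M − R ≤ H ≤ M + R entrywise with M symmetric and R entrywise nonnegative. Then the smallest eigenvalue of H satisfies λ_min(H) ≥ λ_min(M) − ρ(R), where ρ(R) is the spectral radius of R. -/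
open scoped ComplexOrder

open scoped ENNReal NNReal

attribute [local instance] Matrix.linftyOpNormedRing Matrix.linftyOpNormedAlgebra

namespace RohnAux


open Matrix

variable {n : ℕ}

lemma abs_pow_entry_le (D R : Matrix (Fin n) (Fin n) ℝ)
    (h : ∀ i j, |D i j| ≤ R i j) :
    ∀ (k : ℕ) (i j), |(D ^ k) i j| ≤ (R ^ k) i j := by
  intro k
  induction k with
  | zero =>
    intro i j
    simp only [pow_zero, Matrix.one_apply]
    by_cases hij : i = j <;> simp [hij]
  | succ k ih =>
    intro i j
    rw [pow_succ, pow_succ, Matrix.mul_apply, Matrix.mul_apply]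
    refine (Finset.abs_sum_le_sum_abs _ _).trans (Finset.sum_le_sum fun l _ => ?_)
    rw [abs_mul]
    exact mul_le_mul (ih i l) (h l j) (abs_nonneg _) ((abs_nonneg _).trans (ih i l))

lemma map_ofReal_pow (A : Matrix (Fin n) (Fin n) ℝ) (k : ℕ) :
    (A.map Complex.ofReal) ^ k = (A ^ k).map Complex.ofReal := by
  exact
    (map_pow (Complex.ofRealHom.mapMatrix) A k).symm

lemma nnnorm_map_le_of_abs_le {A B : Matrix (Fin n) (Fin n) ℝ}
    (h : ∀ i j, |A i j| ≤ B i j) :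
    ‖A.map Complex.ofReal‖₊ ≤ ‖B.map Complex.ofReal‖₊ := by
  rw [Matrix.linfty_opNNNorm_def, Matrix.linfty_opNNNorm_def]
  refine Finset.sup_mono_fun fun i _ => Finset.sum_le_sum fun j _ => ?_
  simp only [Matrix.map_apply, Complex.nnnorm_real]
  have h1 : ‖A i j‖ ≤ ‖B i j‖ := by
    rw [Real.norm_eq_abs, Real.norm_eq_abs]
    exact (h i j).trans (le_abs_self _)
  exact h1

lemma spectralRadius_mono_of_abs_le (D R : Matrix (Fin n) (Fin n) ℝ)
    (h : ∀ i j, |D i j| ≤ R i j) :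
    spectralRadius ℂ (D.map Complex.ofReal) ≤ spectralRadius ℂ (R.map Complex.ofReal) := by
  have hD := spectrum.pow_nnnorm_pow_one_div_tendsto_nhds_spectralRadius (D.map Complex.ofReal)
  have hR := spectrum.pow_nnnorm_pow_one_div_tendsto_nhds_spectralRadius (R.map Complex.ofReal)
  refine le_of_tendsto_of_tendsto' hD hR fun k => ?_
  refine ENNReal.rpow_le_rpow ?_ (by positivity)
  rw [ENNReal.coe_le_coe, map_ofReal_pow, map_ofReal_pow]
  exact nnnorm_map_le_of_abs_le (abs_pow_entry_le D R h k)



open Matrix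

variable {n : ℕ}

lemma ofReal_mem_spectrum {A : Matrix (Fin n) (Fin n) ℝ} {μ : ℝ}
    (hμ : μ ∈ spectrum ℝ A) :
    (μ : ℂ) ∈ spectrum ℂ (A.map Complex.ofReal) := by
  rw [spectrum.mem_iff] at hμ ⊢
  intro hcon
  apply hμ
  rw [Matrix.isUnit_iff_isUnit_det] at hcon ⊢
  have hmap : (algebraMap ℂ (Matrix (Fin n) (Fin n) ℂ) (μ : ℂ) - A.map Complex.ofReal)
      = (algebraMap ℝ (Matrix (Fin n) (Fin n) ℝ) μ - A).map Complex.ofReal := by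
    ext i j
    by_cases hij : i = j <;>
      simp [Matrix.map_apply, Matrix.algebraMap_matrix_apply, hij]
  rw [hmap] at hcon
  rw [show ((algebraMap ℝ (Matrix (Fin n) (Fin n) ℝ) μ - A).map Complex.ofReal)
      = Complex.ofRealHom.mapMatrix (algebraMap ℝ (Matrix (Fin n) (Fin n) ℝ) μ - A) from rfl,
    ← RingHom.map_det] at hcon
  rw [isUnit_iff_ne_zero] at hcon ⊢
  intro h0
  rw [h0] at hcon
  simp at hcon

lemma quadratic_lower (A : Matrix (Fin n) (Fin n) ℝ) (hA : A.IsHermitian) {c : ℝ}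
    (h : ∀ i, c ≤ hA.eigenvalues i) (v : Fin n → ℝ) :
    c * (v ⬝ᵥ v) ≤ v ⬝ᵥ (A *ᵥ v) := by
  have hU : (hA.eigenvectorUnitary : Matrix (Fin n) (Fin n) ℝ) *
      star (hA.eigenvectorUnitary : Matrix (Fin n) (Fin n) ℝ) = 1 :=
    (Matrix.mem_unitaryGroup_iff).mp hA.eigenvectorUnitary.2
  have h1 : A - c • (1 : Matrix (Fin n) (Fin n) ℝ) =
      (hA.eigenvectorUnitary : Matrix (Fin n) (Fin n) ℝ) *
        Matrix.diagonal (fun i => hA.eigenvalues i - c) *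
        star (hA.eigenvectorUnitary : Matrix (Fin n) (Fin n) ℝ) := by
    conv_lhs => rw [hA.spectral_theorem, Unitary.conjStarAlgAut_apply]
    have hc : c • (1 : Matrix (Fin n) (Fin n) ℝ) =
        (hA.eigenvectorUnitary : Matrix (Fin n) (Fin n) ℝ) *
          (c • (1 : Matrix (Fin n) (Fin n) ℝ)) *
          star (hA.eigenvectorUnitary : Matrix (Fin n) (Fin n) ℝ) := by
      rw [Matrix.mul_smul, Matrix.mul_one, Matrix.smul_mul, hU]
    rw [hc, ← Matrix.sub_mul, ← Matrix.mul_sub]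
    congr 1
    rw [← Matrix.diagonal_one, ← Matrix.diagonal_smul, Matrix.diagonal_sub]
    congr 1
    ext i
    simp [Pi.smul_apply]
  have hPSD : (A - c • (1 : Matrix (Fin n) (Fin n) ℝ)).PosSemidef := by
    rw [h1, Matrix.star_eq_conjTranspose]
    exact (Matrix.PosSemidef.diagonal fun i => sub_nonneg.2 (h i)).mul_mul_conjTranspose_same _
  have h2 := hPSD.dotProduct_mulVec_nonneg v
  have h3 : star v = v := by simp
  rw [h3, Matrix.sub_mulVec, Matrix.smul_mulVec, Matrix.one_mulVec,
    dotProduct_sub, dotProduct_smul] at h2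
  have : c • (v ⬝ᵥ v) = c * (v ⬝ᵥ v) := rfl
  linarith [h2]

end RohnAux

open RohnAux in
/-- Rohn's eigenvalue bound: if H lies in the interval matrix with midpoint M
(symmetric) and entrywise-nonnegative radius R, then the smallest eigenvalue of H
is at least the smallest eigenvalue of M minus the spectral radius of R. -/
theorem eigenvalue_lower_bound_interval_matrix {n : ℕ} (hn : 0 < n)
    (H M R : Matrix (Fin n) (Fin n) ℝ)
    (hH : H.IsHermitian) (hM : M.IsHermitian)
    (hR : ∀ i j, 0 ≤ R i j)
    (hlo : ∀ i j, M i j - R i j ≤ H i j)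
    (hhi : ∀ i j, H i j ≤ M i j + R i j) :
    (⨅ i, hM.eigenvalues i) - (spectralRadius ℂ (R.map Complex.ofReal)).toReal
      ≤ ⨅ i, hH.eigenvalues i := by
  haveI : Nonempty (Fin n) := ⟨⟨0, hn⟩⟩
  set D : Matrix (Fin n) (Fin n) ℝ := H - M with hDdef
  have hD : D.IsHermitian := hH.sub hM
  have habs : ∀ i j, |D i j| ≤ R i j := fun i j => by
    rw [abs_le]
    constructor
    · have := hlo i j; simp only [hDdef, Matrix.sub_apply]; linarith
    · have := hhi i j; simp only [hDdef, Matrix.sub_apply]; linarith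
  set ρE := spectralRadius ℂ (R.map Complex.ofReal) with hρE
  set ρ := ρE.toReal with hρ
  -- spectralRadius is finite
  have hρtop : ρE ≠ ⊤ :=
    ne_top_of_le_ne_top ENNReal.coe_ne_top
      (spectrum.spectralRadius_le_nnnorm (𝕜 := ℂ) (R.map Complex.ofReal))
  -- eigenvalues of D bounded by ρ
  have hDeig : ∀ i, |hD.eigenvalues i| ≤ ρ := by
    intro i
    have h1 : ((hD.eigenvalues i : ℂ)) ∈ spectrum ℂ (D.map Complex.ofReal) :=
      ofReal_mem_spectrum (hD.eigenvalues_mem_spectrum_real i)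
    have h2 : (‖(hD.eigenvalues i : ℂ)‖₊ : ℝ≥0∞) ≤ spectralRadius ℂ (D.map Complex.ofReal) :=
      le_iSup₂ (f := fun k (_ : k ∈ spectrum ℂ (D.map Complex.ofReal)) => (‖k‖₊ : ℝ≥0∞)) _ h1
    have h3 := h2.trans (spectralRadius_mono_of_abs_le D R habs)
    have h4 := ENNReal.toReal_mono hρtop h3
    rw [ENNReal.coe_toReal, coe_nnnorm, Complex.norm_real, Real.norm_eq_abs] at h4
    exact h4
  have hquadM : ∀ v : Fin n → ℝ, (⨅ i, hM.eigenvalues i) * (dotProduct v v) ≤ dotProduct v (M.mulVec v) :=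
    quadratic_lower M hM fun i => ciInf_le (Finite.bddBelow_range _) i
  have hquadD : ∀ v : Fin n → ℝ, (-ρ) * (dotProduct v v) ≤ dotProduct v (D.mulVec v) :=
    quadratic_lower D hD fun i => neg_le_of_abs_le (hDeig i)
  refine le_ciInf fun i => ?_
  set v : Fin n → ℝ := ⇑(hH.eigenvectorBasis i) with hvdef
  have hv : H.mulVec v = hH.eigenvalues i • v := hH.mulVec_eigenvectorBasis i
  have hvne : v ≠ 0 := by
    intro h0
    exact hH.eigenvectorBasis.orthonormal.ne_zero i (by ext j; exact congrFun h0 j)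
  have hpos : 0 < dotProduct v v := by
    rcases (Finset.sum_nonneg fun j _ => mul_self_nonneg (v j)).lt_or_eq with h | h
    · exact h
    · exact absurd (dotProduct_self_eq_zero.mp h.symm) hvne
  have hsplit : dotProduct v (H.mulVec v) = dotProduct v (M.mulVec v) + dotProduct v (D.mulVec v) := by
    have : H = M + D := by rw [hDdef]; abel
    rw [this, Matrix.add_mulVec, dotProduct_add]
  have heig : dotProduct v (H.mulVec v) = hH.eigenvalues i * (dotProduct v v) := by
    rw [hv, dotProduct_smul]; rfl
  have hineq : ((⨅ i, hM.eigenvalues i) - ρ) * (dotProduct v v) ≤ hH.eigenvalues i * (dotProduct v v) := by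
    rw [← heig, hsplit, sub_mul]
    have := hquadM v
    have := hquadD v
    linarith
  exact le_of_mul_le_mul_right hineq hpos
end

section
/- Let ϱ : ℝⁿ → ℝ be differentiable at z̄ and write ϱ = ϱᵃ − ϱᵇ with ϱᵃ, ϱᵇ convex on a compact polytope P = convexHull(vert(P)) ⊆ ℝⁿ containing z̄, both differentiable at z̄. Define the linearization ϱ̄(z) = ϱ(z̄) + ∇ϱ(z̄)ᵀ(z−z̄), the error e(z) = ϱ(z) − ϱ̄(z), and e⁻ = min_{z ∈ vert(P)} (ϱ̄ᵃ(z) − ϱᵇ(z) − ϱ̄(z)), e⁺ = max_{z ∈ vert(P)} (ϱᵃ(z) − ϱ̄ᵇ(z) − ϱ̄(z)), where ϱ̄ˢ(z) = ϱˢ(z̄) + ∇ϱˢ(z̄)ᵀ(z−z̄) for s ∈ {a,b}. Then e(z) ∈ [e⁻, e⁺] for all z ∈ P. -/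
-- gradient inequality
theorem grad_ineq {E : Type*} [NormedAddCommGroup E] [NormedSpace ℝ E]
    {s : Set E} {f : E → ℝ} (hf : ConvexOn ℝ s f) {x y : E} (hx : x ∈ s) (hy : y ∈ s)
    {F : E →L[ℝ] ℝ} (hF : HasFDerivAt f F x) : F (y - x) ≤ f y - f x := by
  set g : ℝ → ℝ := fun t => f (x + t • (y - x)) with hg
  have hL : ∀ t : ℝ, HasDerivAt (fun t : ℝ => x + t • (y - x)) (y - x) t := by
    intro t
    simpa using ((hasDerivAt_id t).smul_const (y - x)).const_add x
  have hgd : HasDerivAt g (F (y - x)) 0 := by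
    have hF0 : HasFDerivAt f F (x + (0:ℝ) • (y - x)) := by simpa using hF
    have := hF0.comp_hasDerivAt (x := (0:ℝ)) (hL 0)
    exact this
  have hslope : Filter.Tendsto (slope g 0) (nhdsWithin 0 {(0:ℝ)}ᶜ) (nhds (F (y - x))) :=
    hasDerivAt_iff_tendsto_slope.1 hgd
  have hslope' : Filter.Tendsto (slope g 0) (nhdsWithin 0 (Set.Ioi 0)) (nhds (F (y - x))) :=
    hslope.mono_left (nhdsWithin_mono _ (fun t ht => by
      simp only [Set.mem_compl_iff, Set.mem_singleton_iff]
      exact ne_of_gt ht))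
  refine le_of_tendsto hslope' ?_
  filter_upwards [Ioo_mem_nhdsGT_of_mem (Set.left_mem_Ico.2 one_pos)] with t ht
  obtain ⟨ht0, ht1⟩ := ht
  have hcomb := hf.2 hx hy (by linarith : (0:ℝ) ≤ 1 - t) (le_of_lt ht0) (by ring)
  have hpt : (1 - t) • x + t • y = x + t • (y - x) := by module
  rw [hpt] at hcomb
  have : g t - g 0 ≤ t * (f y - f x) := by
    simp only [hg, zero_smul, add_zero, smul_eq_mul] at hcomb ⊢
    nlinarith
  rw [slope_def_field, sub_zero, div_le_iff₀ ht0]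
  linarith [this]

theorem delta_convex {n : ℕ} {s : Set (Fin n → ℝ)} (hs : Convex ℝ s)
    {f : (Fin n → ℝ) → ℝ} (hf : ConvexOn ℝ s f) (zbar : Fin n → ℝ)
    (F : (Fin n → ℝ) →L[ℝ] ℝ) :
    ConvexOn ℝ s (fun z => f z - f zbar - F (z - zbar)) := by
  refine ⟨hs, fun x hx y hy a b ha hb hab => ?_⟩
  have h := hf.2 hx hy ha hb hab
  have hz : a • x + b • y - zbar = a • (x - zbar) + b • (y - zbar) := by
    have : zbar = a • zbar + b • zbar := by rw [← add_smul, hab, one_smul]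
    nth_rewrite 1 [this]; module
  have hF : F (a • x + b • y - zbar) = a * F (x - zbar) + b * F (y - zbar) := by
    rw [hz, map_add, map_smul, map_smul]; simp
  simp only [smul_eq_mul] at h ⊢
  have hc : a * f zbar + b * f zbar = f zbar := by rw [← add_mul, hab, one_mul]
  nlinarith [h, hF, hc]


/-- Linearization-error enclosure via DC programming: on a polytope P = conv(V),
the error e(z) = f(z) − f̄(z) of the first-order expansion of the DC function
f = fa − fb at zbar lies in [e⁻, e⁺], where e⁻ and e⁺ are obtained by evaluating
the concave minorant and convex majorant of e at the vertices. -/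
theorem linearization_error_enclosure {n : ℕ}
    (V : Finset (Fin n → ℝ)) (hV : V.Nonempty)
    (fa fb : (Fin n → ℝ) → ℝ)
    (hfa : ConvexOn ℝ (convexHull ℝ (V : Set (Fin n → ℝ))) fa)
    (hfb : ConvexOn ℝ (convexHull ℝ (V : Set (Fin n → ℝ))) fb)
    (zbar : Fin n → ℝ) (hzbar : zbar ∈ convexHull ℝ (V : Set (Fin n → ℝ)))
    (Fa Fb : (Fin n → ℝ) →L[ℝ] ℝ)
    (hFa : HasFDerivAt fa Fa zbar) (hFb : HasFDerivAt fb Fb zbar) :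
    ∀ z ∈ convexHull ℝ (V : Set (Fin n → ℝ)),
      -- e(z) = f(z) − f̄(z) with f = fa − fb and f̄(z) = f(zbar) + ∇f(zbar)ᵀ(z−zbar)
      (fa z - fb z) - ((fa zbar - fb zbar) + (Fa (z - zbar) - Fb (z - zbar)))
        ∈ Set.Icc
          (V.inf' hV (fun v =>
            ((fa zbar + Fa (v - zbar)) - fb v)
              - ((fa zbar - fb zbar) + (Fa (v - zbar) - Fb (v - zbar)))))
          (V.sup' hV (fun v =>
            (fa v - (fb zbar + Fb (v - zbar)))
              - ((fa zbar - fb zbar) + (Fa (v - zbar) - Fb (v - zbar))))) := by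
  intro z hz
  set S : Set (Fin n → ℝ) := convexHull ℝ (V : Set (Fin n → ℝ)) with hS
  set Da : (Fin n → ℝ) → ℝ := fun w => fa w - fa zbar - Fa (w - zbar) with hDa
  set Db : (Fin n → ℝ) → ℝ := fun w => fb w - fb zbar - Fb (w - zbar) with hDb
  have hDaconv : ConvexOn ℝ S Da := delta_convex (convex_convexHull ℝ _) hfa zbar Fa
  have hDbconv : ConvexOn ℝ S Db := delta_convex (convex_convexHull ℝ _) hfb zbar Fb
  have hDa0 : 0 ≤ Da z := by
    have := grad_ineq hfa hzbar hz hFa; simp only [hDa]; linarith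
  have hDb0 : 0 ≤ Db z := by
    have := grad_ineq hfb hzbar hz hFb; simp only [hDb]; linarith
  obtain ⟨va, hva, hvale⟩ := hDaconv.exists_ge_of_mem_convexHull
    (subset_convexHull ℝ (V : Set (Fin n → ℝ))) hz
  obtain ⟨vb, hvb, hvble⟩ := hDbconv.exists_ge_of_mem_convexHull
    (subset_convexHull ℝ (V : Set (Fin n → ℝ))) hz
  constructor
  · -- lower bound
    have h1 : V.inf' hV (fun v =>
        ((fa zbar + Fa (v - zbar)) - fb v)
          - ((fa zbar - fb zbar) + (Fa (v - zbar) - Fb (v - zbar)))) ≤ - Db vb := by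
      have := Finset.inf'_le (b := vb) (f := fun v =>
        ((fa zbar + Fa (v - zbar)) - fb v)
          - ((fa zbar - fb zbar) + (Fa (v - zbar) - Fb (v - zbar)))) (by simpa using hvb)
      calc _ ≤ _ := this
        _ = - Db vb := by simp only [hDb]; ring
    have : - Db vb ≤ (fa z - fb z) - ((fa zbar - fb zbar) + (Fa (z - zbar) - Fb (z - zbar))) := by
      have he : (fa z - fb z) - ((fa zbar - fb zbar) + (Fa (z - zbar) - Fb (z - zbar)))
          = Da z - Db z := by simp only [hDa, hDb]; ring
      rw [he]; linarith
    linarith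
  · -- upper bound
    have h1 : Da va ≤ V.sup' hV (fun v =>
        (fa v - (fb zbar + Fb (v - zbar)))
          - ((fa zbar - fb zbar) + (Fa (v - zbar) - Fb (v - zbar)))) := by
      have := Finset.le_sup' (b := va) (f := fun v =>
        (fa v - (fb zbar + Fb (v - zbar)))
          - ((fa zbar - fb zbar) + (Fa (v - zbar) - Fb (v - zbar)))) (by simpa using hva)
      calc Da va = _ := by simp only [hDa]; ring
        _ ≤ _ := this
    have : (fa z - fb z) - ((fa zbar - fb zbar) + (Fa (z - zbar) - Fb (z - zbar))) ≤ Da va := by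
      have he : (fa z - fb z) - ((fa zbar - fb zbar) + (Fa (z - zbar) - Fb (z - zbar)))
          = Da z - Db z := by simp only [hDa, hDb]; ring
      rw [he]; linarith
    linarith
end

section
/- Let X = CZ(G_x, c_x, A_x, b_x) and W = CZ(G_w, c_w, A_w, b_w) be constrained zonotopes in ℝⁿ and ℝ^p respectively, and M ∈ ℝ^{p×n}. If W is a zonotope (no constraints), M = I with p = n, then X ∩_I W as computed by the constrained-zonotope intersection formula is exactly X ∩ W; in particular, unlike for plain zonotopes, no outer approximation is introduced by intersection of constrained zonotopes. -/
/-- A zonotope: a constrained zonotope without constraints. -/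
def Zon {n g : Type*} [Fintype g] (G : Matrix n g ℝ) (c : n → ℝ) : Set (n → ℝ) :=
  {x | ∃ ξ : g → ℝ, (∀ i, |ξ i| ≤ 1) ∧ x = G.mulVec ξ + c}

/-- The constrained-zonotope intersection formula with M = I and W a zonotope is
exactly the ordinary intersection X ∩ W — no outer approximation is introduced. -/
theorem cz_intersection_exact {n ngx ngw nhx : ℕ}
    (Gx : Matrix (Fin n) (Fin ngx) ℝ) (cx : Fin n → ℝ)
    (Ax : Matrix (Fin nhx) (Fin ngx) ℝ) (bx : Fin nhx → ℝ)
    (Gw : Matrix (Fin n) (Fin ngw) ℝ) (cw : Fin n → ℝ) :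
    CZ (Matrix.fromCols Gx (0 : Matrix (Fin n) (Fin ngw) ℝ)) cx
        (Matrix.fromRows (Matrix.fromCols Ax (0 : Matrix (Fin nhx) (Fin ngw) ℝ))
          (Matrix.fromCols ((1 : Matrix (Fin n) (Fin n) ℝ) * Gx) (-Gw)))
        (Sum.elim bx (cw - (1 : Matrix (Fin n) (Fin n) ℝ).mulVec cx))
      = CZ Gx cx Ax bx ∩ Zon Gw cw := by
  ext x
  simp only [CZ, Zon, Set.mem_setOf_eq, Set.mem_inter_iff]
  constructor
  · rintro ⟨ξ, hb, hA, hx⟩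
    rw [Matrix.fromRows_mulVec] at hA
    have h1 := congrArg (· ∘ Sum.inl) hA
    have h2 := congrArg (· ∘ Sum.inr) hA
    simp only [Sum.elim_comp_inl, Sum.elim_comp_inr] at h1 h2
    have hsum : ξ = Sum.elim (ξ ∘ Sum.inl) (ξ ∘ Sum.inr) := by
      ext (i | i) <;> rfl
    rw [hsum, Matrix.fromCols_mulVec_sumElim] at h1 h2 hx
    simp only [Matrix.one_mul, Matrix.zero_mulVec, add_zero, Matrix.one_mulVec,
      Matrix.neg_mulVec] at h1 h2 hx
    refine ⟨⟨ξ ∘ Sum.inl, fun i => hb _, h1, hx⟩, ξ ∘ Sum.inr, fun i => hb _, ?_⟩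
    ext i
    have := congrFun h2 i
    have := congrFun hx i
    simp only [Pi.add_apply, Pi.neg_apply, Pi.sub_apply] at *
    linarith
  · rintro ⟨⟨ξ, hξb, hξA, hξx⟩, ζ, hζb, hζx⟩
    refine ⟨Sum.elim ξ ζ, fun i => by cases i <;> simp [hξb, hζb], ?_, ?_⟩
    · rw [Matrix.fromRows_mulVec, Matrix.fromCols_mulVec_sumElim,
        Matrix.fromCols_mulVec_sumElim]
      simp only [Matrix.zero_mulVec, add_zero, Matrix.one_mul, Matrix.one_mulVec, hξA,
        Matrix.neg_mulVec]
      ext (i | i)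
      · simp
      · have h1 := congrFun hξx i
        have h2 := congrFun hζx i
        simp only [Pi.add_apply] at h1 h2
        simp only [Sum.elim_inr, Pi.add_apply, Pi.neg_apply, Pi.sub_apply]
        linarith
    · rw [Matrix.fromCols_mulVec_sumElim]
      simp [hξx]
end
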